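/- Every w-projective w-module over R is w-split. -/

import Mathlib

open CategoryTheory

universe u

section Defs
variable (R : Type u) [CommRing R]

/-- `J` is a Glaz–Vasconcelos ideal (GV-ideal): finitely generated and the natural map
`R → Hom_R(J, R)`, `r ↦ (x ↦ r•x)`, is an isomorphism. -/
def IsGVIdeal (J : Ideal R) : Prop :=
  J.FG ∧ Function.Bijective fun r : R =>
    ((LinearMap.lsmul R R r).comp J.subtype : J →ₗ[R] R)

variable (M : Type u) [AddCommGroup M] [Module R M]

/-- `M` is GV-torsion: every element is killed by some GV-ideal. -/
def IsGVTorsion : Prop :=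
  ∀ x : M, ∃ J : Ideal R, IsGVIdeal R J ∧ ∀ a ∈ J, a • x = 0

/-- `M` is GV-torsionfree: no nonzero element is killed by a GV-ideal. -/
def IsGVTorsionFree : Prop :=
  ∀ x : M, (∃ J : Ideal R, IsGVIdeal R J ∧ ∀ a ∈ J, a • x = 0) → x = 0

/-- The w-splitting condition on the epimorphism `g` of a short exact sequence:
there are a GV-ideal `⟨d₁,…,dₙ⟩` and maps `hₖ` with `g ∘ hₖ = (dₖ•·)`. -/
def IsWSplitSeq {B C : Type u} [AddCommGroup B] [Module R B] [AddCommGroup C] [Module R C]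
    (g : B →ₗ[R] C) : Prop :=
  ∃ (n : ℕ) (d : Fin n → R), IsGVIdeal R (Ideal.span (Set.range d)) ∧
    ∃ h : Fin n → (C →ₗ[R] B), ∀ k, ∀ c : C, g (h k c) = d k • c

/-- `M` is a w-split module: some short exact sequence `0 → K → P → M → 0` with
`P` projective is w-split. -/
def IsWSplitModule : Prop :=
  ∃ (P : Type u) (_ : AddCommGroup P) (_ : Module R P), Module.Projective R P ∧
    ∃ g : P →ₗ[R] M, Function.Surjective g ∧ IsWSplitSeq R g

/-- The Ext group `Ext^n_R(M, N)` as an object of `ModuleCat R`. -/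
noncomputable def extMod (n : ℕ) (N : Type u) [AddCommGroup N] [Module R N] : ModuleCat.{u} R :=
  ((Ext R (ModuleCat.{u} R) n).obj (Opposite.op (ModuleCat.of R M))).obj (ModuleCat.of R N)

/-- `M` is a w-module: GV-torsionfree and `Ext¹_R(R/J, M) = 0` for all GV-ideals `J`. -/
def IsWModule : Prop :=
  IsGVTorsionFree R M ∧
    ∀ J : Ideal R, IsGVIdeal R J → Subsingleton (extMod R (R ⧸ J) 1 M)

/-- `ι : M →ₗ E` exhibits `E` as a w-envelope `M_w` of the GV-torsionfree module `M`:
`E` is a w-module containing `M` with GV-torsion quotient `E/M`. -/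
def IsWEnvelope (E : Type u) [AddCommGroup E] [Module R E] (ι : M →ₗ[R] E) : Prop :=
  Function.Injective ι ∧ IsWModule R E ∧ IsGVTorsion R (E ⧸ LinearMap.range ι)

/-- `M` is w-projective: `Ext¹_R(L(M), N)` is GV-torsion for every GV-torsionfree
w-module `N`, where `L(M) = (M/tor_GV(M))_w`. -/
def IsWProjective : Prop :=
  ∀ (T : Submodule R M),
    (∀ x : M, x ∈ T ↔ ∃ J : Ideal R, IsGVIdeal R J ∧ ∀ a ∈ J, a • x = 0) →
    ∀ (L : Type u) (_ : AddCommGroup L) (_ : Module R L) (ι : (M ⧸ T) →ₗ[R] L),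
      IsWEnvelope R (M ⧸ T) L ι →
      ∀ (N : Type u) (_ : AddCommGroup N) (_ : Module R N),
        IsGVTorsionFree R N → IsWModule R N → IsGVTorsion R (extMod R L 1 N)

/-- `I` is a w-ideal: `I_w = I`, i.e. any `x` with `Jx ⊆ I` for some GV-ideal `J`
already lies in `I`. -/
def IsWIdeal (I : Ideal R) : Prop :=
  ∀ x : R, (∃ J : Ideal R, IsGVIdeal R J ∧ ∀ a ∈ J, a * x ∈ I) → x ∈ I

/-- `I` is a maximal w-ideal: maximal among proper w-ideals of `R`. -/
def IsMaximalWIdeal (I : Ideal R) : Prop :=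
  I ≠ ⊤ ∧ IsWIdeal R I ∧ ∀ I' : Ideal R, IsWIdeal R I' → I' ≠ ⊤ → I ≤ I' → I = I'

end Defs


noncomputable section Res
variable {R : Type u} [CommRing R]

/-- one resolution step -/
def resStep (p : Σ (A B : ModuleCat.{u} R), (B ⟶ A)) : Σ (A B : ModuleCat.{u} R), (B ⟶ A) :=
  ⟨p.2.1, ModuleCat.of R (↥(LinearMap.ker (p.2.2.hom : ↥p.2.1 →ₗ[R] ↥p.1)) →₀ R),
    ModuleCat.ofHom (Finsupp.linearCombination R
      ((↑) : LinearMap.ker (p.2.2.hom : ↥p.2.1 →ₗ[R] ↥p.1) → ↥p.2.1))⟩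

variable (M : Type u) [AddCommGroup M] [Module R M]
variable (P : Type u) [AddCommGroup P] [Module R P]
variable (g : P →ₗ[R] M)

def resAux : ℕ → Σ (A B : ModuleCat.{u} R), (B ⟶ A) := fun n =>
  Nat.rec
    ⟨ModuleCat.of R P, ModuleCat.of R (↥(LinearMap.ker g) →₀ R),
      ModuleCat.ofHom (Finsupp.linearCombination R ((↑) : LinearMap.ker g → P))⟩
    (fun _ p => resStep p) n

lemma resAux_succ (n : ℕ) : resAux M P g (n+1) = resStep (resAux M P g n) := rfl

def resX : ℕ → ModuleCat.{u} R := fun n => (resAux M P g n).1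

def resD : ∀ n : ℕ, resX M P g (n+1) ⟶ resX M P g n := fun n => (resAux M P g n).2.2

lemma range_lincomb {V : Type u} [AddCommGroup V] [Module R V] (K : Submodule R V) :
    LinearMap.range (Finsupp.linearCombination R ((↑) : K → V)) = K := by
  rw [Finsupp.range_linearCombination, Subtype.range_coe, Submodule.span_eq]

lemma range_resD_zero : LinearMap.range (ModuleCat.Hom.hom (resD M P g 0) : ↥(resX M P g 1) →ₗ[R] P) = LinearMap.ker g :=
  range_lincomb _

lemma range_resD_succ (n : ℕ) :
    LinearMap.range (ModuleCat.Hom.hom (resD M P g (n+1)) : ↥(resX M P g (n+2)) →ₗ[R] ↥(resX M P g (n+1))) =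
      LinearMap.ker (ModuleCat.Hom.hom (resD M P g n) : ↥(resX M P g (n+1)) →ₗ[R] ↥(resX M P g n)) :=
  range_lincomb _

lemma resD_sq (n : ℕ) : resD M P g (n+1) ≫ resD M P g n = 0 := by
  apply ModuleCat.hom_ext
  apply LinearMap.ext
  intro x
  have hx : (ModuleCat.Hom.hom (resD M P g (n+1)) : ↥(resX M P g (n+2)) →ₗ[R] ↥(resX M P g (n+1))) x ∈
      LinearMap.ker (ModuleCat.Hom.hom (resD M P g n) : ↥(resX M P g (n+1)) →ₗ[R] ↥(resX M P g n)) := by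
    rw [← range_resD_succ]; exact ⟨x, rfl⟩
  exact hx

def resC : ChainComplex (ModuleCat.{u} R) ℕ :=
  ChainComplex.of (resX M P g) (resD M P g) (resD_sq M P g)

end Res

noncomputable section Res2
variable {R : Type u} [CommRing R]
variable (M : Type u) [AddCommGroup M] [Module R M]
variable (P : Type u) [AddCommGroup P] [Module R P] [Module.Projective R P]
variable (g : P →ₗ[R] M) (hg : Function.Surjective g)

lemma resAux_snd_projective (n : ℕ) : Projective (resAux M P g n).2.1 := by
  cases n with
  | zero =>
    exact ModuleCat.projective_of_free.{u, u}
      (M := ModuleCat.of R (↥(LinearMap.ker g) →₀ R)) Finsupp.basisSingleOne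
  | succ n =>
    rw [resAux_succ]
    exact ModuleCat.projective_of_free.{u, u} Finsupp.basisSingleOne

instance resC_projective (n : ℕ) : Projective ((resC M P g).X n) := by
  match n with
  | 0 =>
    show Projective (ModuleCat.of R P)
    exact (IsProjective.iff_projective.{u,u} P).mp inferInstance
  | (n+1) =>
    show Projective ((resAux M P g n).2.1)
    exact resAux_snd_projective M P g n

lemma resC_d_comp_g : (resC M P g).d 1 0 ≫ ModuleCat.ofHom g = 0 := by
  rw [show (resC M P g).d 1 0 = resD M P g 0 from ChainComplex.of_d (resX M P g) (resD M P g) 0]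
  apply ModuleCat.hom_ext
  apply LinearMap.ext
  intro x
  have hx : (ModuleCat.Hom.hom (resD M P g 0) : ↥(resX M P g 1) →ₗ[R] P) x ∈ LinearMap.ker g := by
    rw [← range_resD_zero M P g]; exact ⟨x, rfl⟩
  exact hx

def resPi : resC M P g ⟶ (ChainComplex.single₀ (ModuleCat.{u} R)).obj (ModuleCat.of R M) :=
  (ChainComplex.toSingle₀Equiv _ _).symm ⟨ModuleCat.ofHom g, resC_d_comp_g M P g⟩

omit [Module.Projective R P] in
lemma resC_exactAt (n : ℕ) : (resC M P g).ExactAt (n+1) := by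
  rw [HomologicalComplex.exactAt_iff' _ (n+1+1) (n+1) n (by simp) (by simp)]
  rw [ShortComplex.moduleCat_exact_iff_range_eq_ker]
  show LinearMap.range ((resC M P g).d (n+2) (n+1)).hom =
    LinearMap.ker ((resC M P g).d (n+1) n).hom
  rw [show (resC M P g).d (n+2) (n+1) = resD M P g (n+1) from ChainComplex.of_d _ _ _,
      show (resC M P g).d (n+1) n = resD M P g n from ChainComplex.of_d _ _ _]
  exact range_resD_succ M P g n

include hg in
def resProj : ProjectiveResolution (ModuleCat.of R M) where
  complex := resC M P g
  π := resPi M P g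
  quasiIso := ⟨fun n => by
    cases n with
    | zero =>
      rw [ChainComplex.quasiIsoAt₀_iff, ShortComplex.quasiIso_iff_of_zeros']
      rotate_left
      · rfl
      · rfl
      · rfl
      refine (ShortComplex.exact_and_epi_g_iff_of_iso
        (ShortComplex.isoMk (Iso.refl _) (Iso.refl _) (Iso.refl _)
          (by
            show _ ≫ _ = _ ≫ _
            simp only [Iso.refl_hom, Category.comp_id, Category.id_comp])
          (by
            show _ ≫ _ = _ ≫ _
            exact (Category.id_comp _).trans (Category.comp_id _).symm) :
          _ ≅ ShortComplex.mk ((resC M P g).d 1 0) (ModuleCat.ofHom g) (resC_d_comp_g M P g))).2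
        ⟨?_, ?_⟩
      · refine ShortComplex.Exact.moduleCat_of_range_eq_ker _ _ ?_
        rw [show (resC M P g).d 1 0 = resD M P g 0 from ChainComplex.of_d (resX M P g) (resD M P g) 0]
        exact range_resD_zero M P g
      · exact (ModuleCat.epi_iff_surjective _).2 hg
    | succ n =>
      rw [quasiIsoAt_iff_exactAt']
      · exact resC_exactAt M P g n
      · apply ChainComplex.exactAt_succ_single_obj⟩

end Res2

noncomputable section Bridge
variable {R : Type u} [CommRing R]
variable (M : Type u) [AddCommGroup M] [Module R M]
variable (P : Type u) [AddCommGroup P] [Module R P] [Module.Projective R P]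
variable (g : P →ₗ[R] M) (hg : Function.Surjective g)
variable (N : Type u) [AddCommGroup N] [Module R N]

def resS : ShortComplex (ModuleCat.{u} R) :=
  ((resC M P g).linearYonedaObj R (ModuleCat.of R N)).sc' 0 1 2

def extIsoConcrete : (extMod R M 1 N : ModuleCat.{u} R) ≅ (resS M P g N).moduleCatLeftHomologyData.H :=
  (resProj M P g hg).isoExt 1 (ModuleCat.of R N) ≪≫
    ((resC M P g).linearYonedaObj R (ModuleCat.of R N)).homologyIsoSc' 0 1 2 (by simp) (by simp) ≪≫
    (resS M P g N).moduleCatLeftHomologyData.homologyIso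

end Bridge

section GVBasic
variable {R : Type u} [CommRing R]

theorem isGVIdeal_top : IsGVIdeal R (⊤ : Ideal R) := by
  constructor
  · exact ⟨{1}, by simp [Ideal.span_singleton_one]⟩
  constructor
  · intro r r' hrr'
    have := congrFun (congrArg (fun (φ : _ →ₗ[R] R) => (φ : _ → R)) hrr')
      (⟨1, Submodule.mem_top⟩ : (⊤ : Ideal R))
    simpa using this
  · intro f
    refine ⟨f ⟨1, Submodule.mem_top⟩, ?_⟩
    apply LinearMap.ext
    rintro ⟨x, hx⟩
    show f ⟨1, Submodule.mem_top⟩ • x = f ⟨x, hx⟩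
    have : (⟨x, hx⟩ : (⊤ : Ideal R)) = x • ⟨1, Submodule.mem_top⟩ := by
      apply Subtype.ext; simp
    rw [this, map_smul, smul_eq_mul, smul_eq_mul, mul_comm]

/-- `R` itself is GV-torsionfree. -/
theorem eq_zero_of_gv_ann {J : Ideal R} (hJ : IsGVIdeal R J) {x : R}
    (hx : ∀ a ∈ J, a * x = 0) : x = 0 := by
  have h1 : (fun r : R => ((LinearMap.lsmul R R r).comp J.subtype : J →ₗ[R] R)) x =
      (fun r : R => ((LinearMap.lsmul R R r).comp J.subtype : J →ₗ[R] R)) 0 := by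
    apply LinearMap.ext
    rintro ⟨a, ha⟩
    show x • a = (0 : R) • a
    simp [smul_eq_mul, mul_comm x a, hx a ha]
  exact hJ.2.1 h1

theorem isGVTorsionFree_R : IsGVTorsionFree R R := by
  rintro x ⟨J, hJ, hx⟩
  exact eq_zero_of_gv_ann hJ (fun a ha => by rw [← smul_eq_mul]; exact hx a ha)

theorem isGVTorsionFree_of_injective {A B : Type u} [AddCommGroup A] [Module R A]
    [AddCommGroup B] [Module R B] (φ : A →ₗ[R] B) (hφ : Function.Injective φ)
    (h : IsGVTorsionFree R B) : IsGVTorsionFree R A := by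
  rintro x ⟨J, hJ, hx⟩
  apply hφ
  rw [map_zero]
  exact h (φ x) ⟨J, hJ, fun a ha => by rw [← map_smul, hx a ha, map_zero]⟩

theorem isGVTorsionFree_finsupp (ι : Type u) : IsGVTorsionFree R (ι →₀ R) := by
  rintro x ⟨J, hJ, hx⟩
  ext i
  refine eq_zero_of_gv_ann hJ (fun a ha => ?_)
  have := congrFun (congrArg (fun (y : ι →₀ R) => (y : ι → R)) (hx a ha)) i
  simpa [mul_comm] using this

/-- Extension of maps `J → R` : every linear map is multiplication by some scalar. -/
theorem gv_hom_ext_R {J : Ideal R} (hJ : IsGVIdeal R J) (f : J →ₗ[R] R) :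
    ∃ x : R, ∀ a : J, f a = (a : R) * x := by
  obtain ⟨x, hx⟩ := hJ.2.2 f
  refine ⟨x, fun a => ?_⟩
  have h1 : x • (a : R) = f a :=
    congrFun (congrArg (fun (φ : _ →ₗ[R] R) => (φ : _ → R)) hx) a
  rw [← h1, smul_eq_mul, mul_comm]

/-- Extension property for finitely supported function modules. -/
theorem gv_hom_ext_finsupp {ι : Type u} {J : Ideal R} (hJ : IsGVIdeal R J)
    (f : J →ₗ[R] (ι →₀ R)) : ∃ x : ι →₀ R, ∀ a : J, f a = (a : R) • x := by
  classical
  have hcoord : ∀ i : ι, ∃ x : R, ∀ a : J, f a i = (a : R) * x := by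
    intro i
    exact gv_hom_ext_R hJ ((Finsupp.lapply i).comp f)
  choose x hx using hcoord
  obtain ⟨s, hs⟩ := hJ.1
  have hsJ : ∀ a ∈ s, a ∈ J := fun a ha => hs ▸ Ideal.subset_span ha
  refine ⟨Finsupp.onFinset (s.attach.biUnion (fun a => (f ⟨a.1, hsJ a.1 a.2⟩).support)) x ?_, ?_⟩
  · intro i hi
    by_contra hmem
    have hzero : ∀ a ∈ s, a * x i = 0 := by
      intro a ha
      by_contra hne
      apply hmem
      refine Finset.mem_biUnion.2 ⟨⟨a, ha⟩, Finset.mem_attach _ _, ?_⟩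
      rw [Finsupp.mem_support_iff]
      rw [hx i ⟨a, hsJ a ha⟩]
      exact hne
    apply hi
    refine eq_zero_of_gv_ann hJ (fun a ha => ?_)
    have : J ≤ LinearMap.ker (LinearMap.toSpanSingleton R R (x i)) := by
      rw [← hs, Ideal.span_le]
      intro r hr
      exact hzero r hr
    exact this ha
  · intro a
    ext i
    rw [hx i a]
    simp [mul_comm]

end GVBasic

-- transport of GV-torsion along surjective linear maps
theorem isGVTorsion_of_surjective {R : Type u} [CommRing R]
    {A B : Type u} [AddCommGroup A] [Module R A] [AddCommGroup B] [Module R B]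
    (φ : A →ₗ[R] B) (hφ : Function.Surjective φ) (h : IsGVTorsion R A) :
    IsGVTorsion R B := by
  intro b
  obtain ⟨a, rfl⟩ := hφ b
  obtain ⟨J, hJ, hk⟩ := h a
  exact ⟨J, hJ, fun r hr => by rw [← map_smul, hk r hr, map_zero]⟩

theorem quotKerEquivOfSurjective_symm_apply {R : Type u} [CommRing R]
    {A B : Type u} [AddCommGroup A] [Module R A] [AddCommGroup B] [Module R B]
    (φ : A →ₗ[R] B) (hφ : Function.Surjective φ) (a : A) :
    (φ.quotKerEquivOfSurjective hφ).symm (φ a) = Submodule.Quotient.mk a := by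
  apply (φ.quotKerEquivOfSurjective hφ).injective
  rw [LinearEquiv.apply_symm_apply]
  rfl

noncomputable section Core
variable {R : Type u} [CommRing R]
variable (M : Type u) [AddCommGroup M] [Module R M]
variable (P : Type u) [AddCommGroup P] [Module R P] [Module.Projective R P]
variable (g : P →ₗ[R] M) (hg : Function.Surjective g)
variable (N : Type u) [AddCommGroup N] [Module R N]

-- sanity checks on defeq
example : ((resC M P g).X 1 : Type u) = ((↥(LinearMap.ker g) →₀ R) : Type u) := rfl
example : ((resC M P g).X 0 : Type u) = P := rfl
example (f : (resS M P g N).X₂) :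
    (resS M P g N).g f = (resC M P g).d 2 1 ≫ f := rfl
example (h : (resS M P g N).X₁) :
    (resS M P g N).f h = (resC M P g).d 1 0 ≫ h := rfl
example (f : (↥(LinearMap.ker g) →₀ R) →ₗ[R] N) : (resS M P g N).X₂ := ModuleCat.ofHom f
example (h : P →ₗ[R] N) : (resS M P g N).X₁ := ModuleCat.ofHom h

include hg in
theorem subsingleton_extMod_of_lift
    (hext : ∀ f : ↥(LinearMap.ker g) →ₗ[R] N, ∃ h : P →ₗ[R] N,
      ∀ k : LinearMap.ker g, h k = f k) :
    Subsingleton (extMod R M 1 N) := by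
  have e : (extMod R M 1 N : Type u) ≃ ↥((resS M P g N).moduleCatLeftHomologyData.H) :=
    ((forget (ModuleCat R)).mapIso (extIsoConcrete M P g hg N)).toEquiv
  suffices h : Subsingleton ↥((resS M P g N).moduleCatLeftHomologyData.H) from e.subsingleton
  refine (Submodule.Quotient.subsingleton_iff).2 (eq_top_iff.2 ?_)
  rintro ⟨f, hf⟩ -
  set f' : (↥(LinearMap.ker g) →₀ R) →ₗ[R] N := f.hom with hf'def
  have hf0 : ∀ x ∈ LinearMap.ker (ModuleCat.Hom.hom (resD M P g 0) : ↥(resX M P g 1) →ₗ[R] P), f' x = 0 := by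
    intro x hx
    rw [← range_resD_succ M P g 0] at hx
    obtain ⟨y, rfl⟩ := hx
    have h1 : (resC M P g).d 2 1 ≫ f = 0 := hf
    rw [show (resC M P g).d 2 1 = resD M P g 1 from ChainComplex.of_d (resX M P g) (resD M P g) 1] at h1
    exact congrArg (fun φ => ModuleCat.Hom.hom φ y) h1
  have hd0single : ∀ (k : LinearMap.ker g) (b : R),
      (ModuleCat.Hom.hom (resD M P g 0) : ↥(resX M P g 1) →ₗ[R] P) (Finsupp.single k b) = b • (k : P) :=
    fun k b => Finsupp.linearCombination_single (R := R) (v := fun k : LinearMap.ker g => (k : P)) b k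
  have hker : ∀ x y : (↥(LinearMap.ker g) →₀ R),
      (ModuleCat.Hom.hom (resD M P g 0) : ↥(resX M P g 1) →ₗ[R] P) x =
        (ModuleCat.Hom.hom (resD M P g 0) : ↥(resX M P g 1) →ₗ[R] P) y → f' x = f' y := by
    intro x y hxy
    have h0 : f' (x - y) = 0 := hf0 _ (LinearMap.mem_ker.2 ((map_sub _ x y).trans (sub_eq_zero.2 hxy)))
    rw [map_sub] at h0
    exact sub_eq_zero.mp h0
  -- induced map on ker g
  set u : ↥(LinearMap.ker g) →ₗ[R] N :=
    { toFun := fun k => f' (Finsupp.single k 1)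
      map_add' := by
        intro a b
        rw [← map_add]
        exact hker _ _ (by show Finsupp.linearCombination R (fun k : LinearMap.ker g => (k : P)) _ = Finsupp.linearCombination R (fun k : LinearMap.ker g => (k : P)) _; simp)
      map_smul' := by
        intro c a
        rw [RingHom.id_apply, ← map_smul]
        exact hker _ _ (by
          show Finsupp.linearCombination R (fun k : LinearMap.ker g => (k : P)) _ = Finsupp.linearCombination R (fun k : LinearMap.ker g => (k : P)) _
          simp [smul_smul]) } with hu
  obtain ⟨h, hh⟩ := hext u
  refine ⟨ModuleCat.ofHom h, ?_⟩
  apply Subtype.ext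
  show (resS M P g N).f.hom (ModuleCat.ofHom h) = f
  show (resC M P g).d 1 0 ≫ ModuleCat.ofHom h = f
  rw [show (resC M P g).d 1 0 = resD M P g 0 from ChainComplex.of_d (resX M P g) (resD M P g) 0]
  apply ModuleCat.hom_ext
  show h.comp (ModuleCat.Hom.hom (resD M P g 0) : ↥(resX M P g 1) →ₗ[R] P) = f'
  apply Finsupp.lhom_ext
  intro k b
  show h ((ModuleCat.Hom.hom (resD M P g 0) : ↥(resX M P g 1) →ₗ[R] P) (Finsupp.single k b)) = f' (Finsupp.single k b)
  rw [hd0single, map_smul]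
  have : f' (Finsupp.single k b) = b • f' (Finsupp.single k 1) := by
    rw [← map_smul]
    exact hker _ _ (by show Finsupp.linearCombination R (fun k : LinearMap.ker g => (k : P)) _ = Finsupp.linearCombination R (fun k : LinearMap.ker g => (k : P)) _; simp [smul_smul])
  rw [this, hh k]
  rfl

include hg in
theorem wsplitSeq_of_torsion
    (htor : IsGVTorsion R (extMod R M 1 ↥(LinearMap.ker g))) :
    IsWSplitSeq R g := by
  have htor' : IsGVTorsion R ↥((resS M P g ↥(LinearMap.ker g)).moduleCatLeftHomologyData.H) := by
    refine isGVTorsion_of_surjective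
      ((extIsoConcrete M P g hg ↥(LinearMap.ker g)).hom.hom :
        extMod R M 1 ↥(LinearMap.ker g) →ₗ[R] _) ?_ htor
    exact (ConcreteCategory.bijective_of_isIso
      (extIsoConcrete M P g hg ↥(LinearMap.ker g)).hom).2
  have hmem : ∀ x, (ModuleCat.Hom.hom (resD M P g 0) : ↥(resX M P g 1) →ₗ[R] P) x ∈ LinearMap.ker g := by
    intro x; rw [← range_resD_zero M P g]; exact ⟨x, rfl⟩
  set q0 : (↥(LinearMap.ker g) →₀ R) →ₗ[R] ↥(LinearMap.ker g) :=
    LinearMap.codRestrict (LinearMap.ker g)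
      (ModuleCat.Hom.hom (resD M P g 0) : ↥(resX M P g 1) →ₗ[R] P) hmem with hq0
  have hq : (resS M P g ↥(LinearMap.ker g)).g.hom (ModuleCat.ofHom q0) = 0 := by
    show (resC M P g).d 2 1 ≫ ModuleCat.ofHom q0 = 0
    rw [show (resC M P g).d 2 1 = resD M P g 1 from ChainComplex.of_d (resX M P g) (resD M P g) 1]
    apply ModuleCat.hom_ext
    apply LinearMap.ext; intro x
    apply Subtype.ext
    show (ModuleCat.Hom.hom (resD M P g 0) : ↥(resX M P g 1) →ₗ[R] P) ((ModuleCat.Hom.hom (resD M P g 1) : _ →ₗ[R] _) x) = 0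
    have hx : (ModuleCat.Hom.hom (resD M P g 1) : _ →ₗ[R] _) x ∈
        LinearMap.ker (ModuleCat.Hom.hom (resD M P g 0) : ↥(resX M P g 1) →ₗ[R] P) := by
      rw [← range_resD_succ M P g 0]; exact ⟨x, rfl⟩
    exact hx
  obtain ⟨J, hJ, hkill⟩ := htor' (Submodule.Quotient.mk ⟨ModuleCat.ofHom q0, hq⟩)
  obtain ⟨s, hs⟩ := hJ.1
  have hd0single : ∀ (k : LinearMap.ker g) (b : R),
      (ModuleCat.Hom.hom (resD M P g 0) : ↥(resX M P g 1) →ₗ[R] P) (Finsupp.single k b) = b • (k : P) :=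
    fun k b => Finsupp.linearCombination_single (R := R)
      (v := fun k : LinearMap.ker g => (k : P)) b k
  refine ⟨s.card, fun i => ((s.equivFin.symm i : s) : R), ?_, ?_⟩
  · have hr : Set.range (fun i => ((s.equivFin.symm i : s) : R)) = ↑s := by
      ext r; constructor
      · rintro ⟨i, rfl⟩; exact (s.equivFin.symm i).2
      · intro hr; exact ⟨s.equivFin ⟨r, hr⟩, by simp⟩
    rw [hr, hs]; exact hJ
  · have key : ∀ i : Fin s.card, ∃ h : M →ₗ[R] P,
        ∀ c : M, g (h c) = ((s.equivFin.symm i : s) : R) • c := by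
      intro i
      set a : R := ((s.equivFin.symm i : s) : R) with ha
      have haJ : a ∈ J := by rw [← hs]; exact Submodule.subset_span (s.equivFin.symm i).2
      have h0 : (Submodule.Quotient.mk (a • (⟨ModuleCat.ofHom q0, hq⟩ :
          LinearMap.ker (resS M P g ↥(LinearMap.ker g)).g.hom)) :
          _ ⧸ LinearMap.range (resS M P g ↥(LinearMap.ker g)).moduleCatToCycles) = 0 :=
        hkill a haJ
      rw [Submodule.Quotient.mk_eq_zero] at h0
      obtain ⟨h1, hh1⟩ := h0
      have hh2 : (resC M P g).d 1 0 ≫ h1 = a • ModuleCat.ofHom q0 :=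
        congrArg Subtype.val hh1
      rw [show (resC M P g).d 1 0 = resD M P g 0 from ChainComplex.of_d (resX M P g) (resD M P g) 0] at hh2
      set h2 : P →ₗ[R] ↥(LinearMap.ker g) := h1.hom with hh2def
      have hfix : ∀ k : LinearMap.ker g, h2 (k : P) = a • k := by
        intro k
        have h3 := congrArg (fun φ => ModuleCat.Hom.hom φ (Finsupp.single k 1)) hh2
        have h4 : h2 ((ModuleCat.Hom.hom (resD M P g 0) : ↥(resX M P g 1) →ₗ[R] P) (Finsupp.single k 1)) =
            a • q0 (Finsupp.single k 1) := h3
        rw [hd0single, one_smul] at h4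
        rw [h4]
        show a • q0 (Finsupp.single k 1) = a • k
        congr 1
        apply Subtype.ext
        show (ModuleCat.Hom.hom (resD M P g 0) : ↥(resX M P g 1) →ₗ[R] P) (Finsupp.single k 1) = (k : P)
        rw [hd0single, one_smul]
      set ψ : P →ₗ[R] P :=
        a • (LinearMap.id : P →ₗ[R] P) - (LinearMap.ker g).subtype.comp h2 with hψdef
      have hψ : LinearMap.ker g ≤ LinearMap.ker ψ := by
        intro x hx
        have : ψ x = a • x - ((h2 x : P)) := rfl
        rw [LinearMap.mem_ker, this, hfix ⟨x, hx⟩]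
        simp
      refine ⟨((LinearMap.ker g).liftQ ψ hψ).comp
        (g.quotKerEquivOfSurjective hg).symm.toLinearMap, ?_⟩
      intro c
      obtain ⟨p, rfl⟩ := hg c
      rw [LinearMap.comp_apply, LinearEquiv.coe_coe, quotKerEquivOfSurjective_symm_apply,
        Submodule.liftQ_apply]
      have : ψ p = a • p - ((h2 p : P)) := rfl
      rw [this, map_sub, map_smul]
      have hker : g ((h2 p : P)) = 0 := (h2 p).2
      rw [hker, sub_zero]
    choose h hh using key
    exact ⟨h, fun i c => hh i c⟩

end Core

noncomputable section Transport
variable {R : Type u} [CommRing R]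

theorem gv_hom_ext_ker {ι M : Type u} [AddCommGroup M] [Module R M]
    (g : (ι →₀ R) →ₗ[R] M) (hM : IsGVTorsionFree R M)
    {J : Ideal R} (hJ : IsGVIdeal R J) (f : J →ₗ[R] ↥(LinearMap.ker g)) :
    ∃ x : ↥(LinearMap.ker g), ∀ a : J, f a = (a : R) • x := by
  obtain ⟨x, hx⟩ := gv_hom_ext_finsupp hJ ((LinearMap.ker g).subtype.comp f)
  have hxker : x ∈ LinearMap.ker g := by
    have hgx : g x = 0 := by
      refine hM (g x) ⟨J, hJ, fun a ha => ?_⟩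
      rw [← map_smul, ← hx ⟨a, ha⟩]
      exact (f ⟨a, ha⟩).2
    exact hgx
  exact ⟨⟨x, hxker⟩, fun a => Subtype.ext (hx a)⟩

/-- transport of `Subsingleton` for Ext in the second variable along a linear equiv -/
theorem subsingleton_extMod_congr {X A B : Type u} [AddCommGroup X] [Module R X]
    [AddCommGroup A] [Module R A] [AddCommGroup B] [Module R B] (e : A ≃ₗ[R] B)
    (h : Subsingleton (extMod R X 1 A)) : Subsingleton (extMod R X 1 B) := by
  have i : (extMod R X 1 A : ModuleCat.{u} R) ≅ extMod R X 1 B :=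
    ((Ext R (ModuleCat.{u} R) 1).obj (Opposite.op (ModuleCat.of R X))).mapIso e.toModuleIso
  exact ((forget (ModuleCat R)).mapIso i).toEquiv.symm.subsingleton

/-- transport of GV-torsion for Ext in the first variable along a linear equiv -/
theorem isGVTorsion_extMod_congr {A B N : Type u} [AddCommGroup A] [Module R A]
    [AddCommGroup B] [Module R B] [AddCommGroup N] [Module R N] (e : A ≃ₗ[R] B)
    (h : IsGVTorsion R (extMod R A 1 N)) : IsGVTorsion R (extMod R B 1 N) := by
  have i : (extMod R A 1 N : ModuleCat.{u} R) ≅ extMod R B 1 N :=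
    ((Ext R (ModuleCat.{u} R) 1).mapIso e.toModuleIso.symm.op).app (ModuleCat.of R N)
  exact isGVTorsion_of_surjective (i.hom.hom : extMod R A 1 N →ₗ[R] extMod R B 1 N)
    (ConcreteCategory.bijective_of_isIso i.hom).2 h

end Transport

-- THEOREM
/-- Every w-projective w-module is w-split. -/
theorem stmt13 {R : Type u} [CommRing R] {M : Type u} [AddCommGroup M] [Module R M]
    (h1 : IsWProjective R M) (h2 : IsWModule R M) : IsWSplitModule R M := by
  classical
  obtain ⟨hTF, hWE⟩ := h2
  -- the GV-torsion submodule of M is ⊥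
  have hT : ∀ x : M, x ∈ (⊥ : Submodule R M) ↔
      ∃ J : Ideal R, IsGVIdeal R J ∧ ∀ a ∈ J, a • x = 0 := by
    intro x
    constructor
    · intro hx
      rw [Submodule.mem_bot R] at hx
      exact ⟨⊤, isGVIdeal_top, fun a _ => by rw [hx, smul_zero]⟩
    · intro hx
      exact (Submodule.mem_bot R).2 (hTF x hx)
  -- M ⧸ ⊥ ≃ M
  set q : (M ⧸ (⊥ : Submodule R M)) ≃ₗ[R] M :=
    Submodule.quotEquivOfEqBot (⊥ : Submodule R M) rfl with hq
  -- M ⧸ ⊥ is a w-envelope of itself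
  have henv : IsWEnvelope R (M ⧸ (⊥ : Submodule R M)) (M ⧸ (⊥ : Submodule R M))
      LinearMap.id := by
    refine ⟨fun a b h => h, ⟨?_, ?_⟩, ?_⟩
    · exact isGVTorsionFree_of_injective q.toLinearMap q.injective hTF
    · intro J hJ
      exact subsingleton_extMod_congr q.symm (hWE J hJ)
    · intro x
      refine ⟨⊤, isGVIdeal_top, fun a _ => ?_⟩
      have hsub : Subsingleton
          ((M ⧸ (⊥ : Submodule R M)) ⧸ LinearMap.range (LinearMap.id :
            (M ⧸ (⊥ : Submodule R M)) →ₗ[R] (M ⧸ (⊥ : Submodule R M)))) := by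
        refine (Submodule.Quotient.subsingleton_iff).2 ?_
        exact LinearMap.range_id
      rw [Subsingleton.elim x 0, smul_zero]
  -- the free presentation of M
  set g : (M →₀ R) →ₗ[R] M := Finsupp.linearCombination R (id : M → M) with hgdef
  have hg : Function.Surjective g := Finsupp.linearCombination_id_surjective R M
  -- K = ker g is a GV-torsionfree w-module
  have hKtf : IsGVTorsionFree R ↥(LinearMap.ker g) :=
    isGVTorsionFree_of_injective (LinearMap.ker g).subtype Subtype.val_injective
      (isGVTorsionFree_finsupp M)
  have hKw : IsWModule R ↥(LinearMap.ker g) := by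
    refine ⟨hKtf, fun J hJ => ?_⟩
    refine subsingleton_extMod_of_lift (R ⧸ J) R J.mkQ (Submodule.mkQ_surjective J)
      ↥(LinearMap.ker g) ?_
    intro f
    have hle : J ≤ LinearMap.ker J.mkQ := le_of_eq (Submodule.ker_mkQ J).symm
    obtain ⟨x, hx⟩ := gv_hom_ext_ker g hTF hJ (f.comp (Submodule.inclusion hle))
    refine ⟨LinearMap.toSpanSingleton R _ x, fun k => ?_⟩
    have hkJ : (k : R) ∈ J := (Submodule.Quotient.mk_eq_zero J).1 (LinearMap.mem_ker.1 k.2)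
    have h1 := hx ⟨(k : R), hkJ⟩
    rw [LinearMap.comp_apply] at h1
    have h2 : Submodule.inclusion hle ⟨(k : R), hkJ⟩ = k := Subtype.ext rfl
    rw [h2] at h1
    rw [LinearMap.toSpanSingleton_apply, ← h1]
  -- apply w-projectivity
  have htorL := h1 (⊥ : Submodule R M) hT (M ⧸ (⊥ : Submodule R M))
    inferInstance inferInstance LinearMap.id henv ↥(LinearMap.ker g)
    inferInstance inferInstance hKtf hKw
  have htor : IsGVTorsion R (extMod R M 1 ↥(LinearMap.ker g)) :=
    isGVTorsion_extMod_congr q htorL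
  exact ⟨M →₀ R, inferInstance, inferInstance, inferInstance, g, hg,
    wsplitSeq_of_torsion M (M →₀ R) g hg htor⟩
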